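/- Let T = {τ_1, …, τ_m} be an (m, β) row paving of A_=. For x ∈ ℝ^d and τ ∈ T, let x_τ denote the orthogonal projection of x onto the affine subspace {y : A_τ y = b_τ} (which is nonempty since S is nonempty). Then the average over the paving satisfies (1/m)·Σ_{τ∈T} d(x_τ, S)² ≤ d(x, S)² − (1/(βm))·‖A_= x − b_=‖², where b_= is the subvector of b indexed by I_=. -/

import Mathlib

open scoped RealInnerProductSpace BigOperators

noncomputable section

/-- An `(m, β)` row paving of the rows of `a` indexed by `I`: a partition of `I` into `m`
nonempty blocks `T 0, …, T (m-1)` such that for each block `τ`, the row submatrix `A_τ` with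
rows `(a i)_{i ∈ τ}` satisfies `λ_max(A_τ A_τ*) ≤ β`, stated equivalently as the quadratic
bound `‖A_τ x‖² = ∑_{i ∈ τ} ⟪a i, x⟫² ≤ β ‖x‖²` for all `x`. -/
def IsRowPaving {n d : ℕ} (a : Fin n → EuclideanSpace ℝ (Fin d)) (I : Finset (Fin n))
    (m : ℕ) (β : ℝ) (T : Fin m → Finset (Fin n)) : Prop :=
  (∀ k, (T k).Nonempty) ∧
  (∀ k l, k ≠ l → Disjoint (T k) (T l)) ∧
  (Finset.univ.biUnion T = I) ∧
  (∀ k, ∀ x : EuclideanSpace ℝ (Fin d), ∑ i ∈ T k, ⟪a i, x⟫ ^ 2 ≤ β * ‖x‖ ^ 2)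

/-- **Lemma (expected progress of a block equality projection).**
For a standardized system with nonempty feasible set `S` and an `(m, β)` row paving `T` of
the equality submatrix `A_=`, if for each block `τ = T k` the point `x_τ` is the orthogonal
projection of `x` onto the affine subspace `{y : A_τ y = b_τ}`, then
`(1/m) Σ_τ d(x_τ, S)² ≤ d(x, S)² − (1/(βm)) ‖A_= x − b_=‖²`. -/
theorem block_projection_average_progress
    {ne ni d m : ℕ} (hm : 0 < m)
    (a : Fin (ne + ni) → EuclideanSpace ℝ (Fin d)) (b : Fin (ne + ni) → ℝ)
    (ha : ∀ i, ‖a i‖ = 1)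
    (S : Set (EuclideanSpace ℝ (Fin d)))
    (hSdef : S = {x | (∀ i : Fin (ne + ni), (i : ℕ) < ne → ⟪a i, x⟫ = b i) ∧
                      (∀ i : Fin (ne + ni), ne ≤ (i : ℕ) → ⟪a i, x⟫ ≤ b i)})
    (hSne : S.Nonempty)
    (β : ℝ) (hβ : 0 < β)
    (T : Fin m → Finset (Fin (ne + ni)))
    (hT : IsRowPaving a (Finset.univ.filter fun i : Fin (ne + ni) => (i : ℕ) < ne) m β T)
    (x : EuclideanSpace ℝ (Fin d))
    -- xτ k is the orthogonal projection of x onto {y : A_(T k) y = b_(T k)}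
    (xτ : Fin m → EuclideanSpace ℝ (Fin d))
    (hproj : ∀ k : Fin m,
      (∀ i ∈ T k, ⟪a i, xτ k⟫ = b i) ∧
      (∀ y : EuclideanSpace ℝ (Fin d), (∀ i ∈ T k, ⟪a i, y⟫ = b i) → ‖x - xτ k‖ ≤ ‖x - y‖)) :
    (1 / m) * ∑ k, Metric.infDist (xτ k) S ^ 2 ≤
      Metric.infDist x S ^ 2 -
        (1 / (β * m)) * ∑ i ∈ (Finset.univ.filter fun i : Fin (ne + ni) => (i : ℕ) < ne),
          (⟪a i, x⟫ - b i) ^ 2 := by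
  obtain ⟨hTne, hTdisj, hTunion, hTpav⟩ := hT
  -- S is closed
  have hcont : ∀ i : Fin (ne + ni), Continuous fun y : EuclideanSpace ℝ (Fin d) => ⟪a i, y⟫ :=
    fun i => continuous_const.inner continuous_id
  have hSclosed : IsClosed S := by
    rw [hSdef]
    have e : {x : EuclideanSpace ℝ (Fin d) |
          (∀ i : Fin (ne + ni), (i : ℕ) < ne → ⟪a i, x⟫ = b i) ∧
          (∀ i : Fin (ne + ni), ne ≤ (i : ℕ) → ⟪a i, x⟫ ≤ b i)}
        = (⋂ i : Fin (ne + ni), ⋂ _ : (i : ℕ) < ne,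
            {x : EuclideanSpace ℝ (Fin d) | ⟪a i, x⟫ = b i}) ∩
          (⋂ i : Fin (ne + ni), ⋂ _ : ne ≤ (i : ℕ),
            {x : EuclideanSpace ℝ (Fin d) | ⟪a i, x⟫ ≤ b i}) := by
      ext y; simp [Set.mem_iInter]
    rw [e]
    exact (isClosed_iInter fun i => isClosed_iInter fun _ =>
        isClosed_eq (hcont i) continuous_const).inter
      (isClosed_iInter fun i => isClosed_iInter fun _ =>
        isClosed_le (hcont i) continuous_const)
  obtain ⟨z, hz, hdz⟩ := hSclosed.exists_infDist_eq_dist hSne x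
  have hz_eq : ∀ i : Fin (ne + ni), (i : ℕ) < ne → ⟪a i, z⟫ = b i := by
    have := hSdef ▸ hz
    exact this.1
  -- key per-block inequality
  have key : ∀ k, Metric.infDist (xτ k) S ^ 2
      + (1 / β) * ∑ i ∈ T k, (⟪a i, x⟫ - b i) ^ 2 ≤ dist x z ^ 2 := by
    intro k
    obtain ⟨hxτ, hmin⟩ := hproj k
    set u := x - xτ k with hu
    set v := z - xτ k with hv
    have hiT : ∀ i ∈ T k, ⟪a i, z⟫ = b i := by
      intro i hi
      have hmem : i ∈ Finset.univ.filter fun i : Fin (ne + ni) => (i : ℕ) < ne := by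
        rw [← hTunion]; exact Finset.mem_biUnion.mpr ⟨k, Finset.mem_univ k, hi⟩
      exact hz_eq i (Finset.mem_filter.mp hmem).2
    have hv0 : ∀ i ∈ T k, ⟪a i, v⟫ = 0 := by
      intro i hi
      rw [hv, inner_sub_right, hiT i hi, hxτ i hi, sub_self]
    -- orthogonality
    have hq : ∀ t : ℝ, ‖u‖ ^ 2 ≤ ‖u‖ ^ 2 - 2 * t * ⟪u, v⟫ + t ^ 2 * ‖v‖ ^ 2 := by
      intro t
      have hy : ∀ i ∈ T k, ⟪a i, xτ k + t • v⟫ = b i := by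
        intro i hi
        rw [inner_add_right, real_inner_smul_right, hv0 i hi, hxτ i hi]; ring
      have hle := hmin _ hy
      have h2 : x - (xτ k + t • v) = u - t • v := by rw [hu]; abel
      rw [h2] at hle
      have hsq : ‖u‖ ^ 2 ≤ ‖u - t • v‖ ^ 2 := by
        nlinarith [norm_nonneg u, norm_nonneg (u - t • v)]
      calc ‖u‖ ^ 2 ≤ ‖u - t • v‖ ^ 2 := hsq
        _ = ‖u‖ ^ 2 - 2 * t * ⟪u, v⟫ + t ^ 2 * ‖v‖ ^ 2 := by
            rw [norm_sub_sq_real, real_inner_smul_right, norm_smul]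
            simp [mul_pow]; ring
    have hc : ⟪u, v⟫ = 0 := by
      rcases eq_or_ne v 0 with hv' | hv'
      · rw [hv', inner_zero_right]
      · have hvp : (0 : ℝ) < ‖v‖ ^ 2 := pow_pos (norm_pos_iff.mpr hv') 2
        have h3 := hq (⟪u, v⟫ / ‖v‖ ^ 2)
        have e1 : (⟪u, v⟫ / ‖v‖ ^ 2) ^ 2 * ‖v‖ ^ 2 = ⟪u, v⟫ ^ 2 / ‖v‖ ^ 2 := by
          field_simp
        have e2 : 2 * (⟪u, v⟫ / ‖v‖ ^ 2) * ⟪u, v⟫ = 2 * (⟪u, v⟫ ^ 2 / ‖v‖ ^ 2) := by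
          field_simp
        rw [e1, e2] at h3
        have h4 : ⟪u, v⟫ ^ 2 / ‖v‖ ^ 2 ≤ 0 := by linarith
        have h5 : ⟪u, v⟫ ^ 2 ≤ 0 := by
          have := (div_nonpos_iff.mp h4)
          rcases this with ⟨h, h'⟩ | ⟨h, h'⟩ <;> linarith
        have := sq_nonneg ⟪u, v⟫
        have h6 : ⟪u, v⟫ ^ 2 = 0 := le_antisymm h5 this
        exact pow_eq_zero_iff two_ne_zero |>.mp h6
    -- Pythagoras
    have hpyth : ‖x - z‖ ^ 2 = ‖u‖ ^ 2 + ‖v‖ ^ 2 := by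
      have exz : x - z = u - v := by rw [hu, hv]; abel
      rw [exz, norm_sub_sq_real, hc]; ring
    have h5 : Metric.infDist (xτ k) S ≤ ‖v‖ := by
      calc Metric.infDist (xτ k) S ≤ dist (xτ k) z := Metric.infDist_le_dist_of_mem hz
        _ = ‖v‖ := by rw [dist_eq_norm, hv, ← norm_neg]; congr 1; abel
    have h7 : Metric.infDist (xτ k) S ^ 2 ≤ ‖v‖ ^ 2 := by
      have h0 : 0 ≤ Metric.infDist (xτ k) S := Metric.infDist_nonneg
      nlinarith
    have h6 : ∑ i ∈ T k, (⟪a i, x⟫ - b i) ^ 2 ≤ β * ‖u‖ ^ 2 := by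
      calc ∑ i ∈ T k, (⟪a i, x⟫ - b i) ^ 2 = ∑ i ∈ T k, ⟪a i, u⟫ ^ 2 :=
            Finset.sum_congr rfl fun i hi => by rw [hu, inner_sub_right, hxτ i hi]
        _ ≤ β * ‖u‖ ^ 2 := hTpav k u
    have h8 : (1 / β) * ∑ i ∈ T k, (⟪a i, x⟫ - b i) ^ 2 ≤ ‖u‖ ^ 2 := by
      rw [one_div, inv_mul_le_iff₀ hβ]
      linarith
    have h9 : dist x z ^ 2 = ‖u‖ ^ 2 + ‖v‖ ^ 2 := by rw [dist_eq_norm, hpyth]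
    linarith
  -- sum over blocks
  have hUnion : ∑ i ∈ Finset.univ.filter (fun i : Fin (ne + ni) => (i : ℕ) < ne),
      (⟪a i, x⟫ - b i) ^ 2 = ∑ k, ∑ i ∈ T k, (⟪a i, x⟫ - b i) ^ 2 := by
    rw [← hTunion, Finset.sum_biUnion]
    intro k _ l _ hkl
    exact hTdisj k l hkl
  have hsum : ∑ k, Metric.infDist (xτ k) S ^ 2
      + (1 / β) * ∑ i ∈ Finset.univ.filter (fun i : Fin (ne + ni) => (i : ℕ) < ne),
        (⟪a i, x⟫ - b i) ^ 2 ≤ (m : ℝ) * dist x z ^ 2 := by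
    have hs := Finset.sum_le_sum (fun k (_ : k ∈ Finset.univ) => key k)
    rw [Finset.sum_add_distrib, ← Finset.mul_sum, Finset.sum_const, Finset.card_univ,
      Fintype.card_fin, nsmul_eq_mul] at hs
    rw [hUnion]
    exact hs
  have hm' : (0 : ℝ) < m := by exact_mod_cast hm
  have hmne : (m : ℝ) ≠ 0 := ne_of_gt hm'
  have hβne : β ≠ 0 := ne_of_gt hβ
  rw [hdz]
  set Sinf := ∑ k, Metric.infDist (xτ k) S ^ 2 with hSinf
  set Stot := ∑ i ∈ Finset.univ.filter (fun i : Fin (ne + ni) => (i : ℕ) < ne),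
    (⟪a i, x⟫ - b i) ^ 2 with hStot
  have goal' : Sinf ≤ (m : ℝ) * dist x z ^ 2 - (1 / β) * Stot := by linarith
  calc (1 / (m : ℝ)) * Sinf
      ≤ (1 / (m : ℝ)) * ((m : ℝ) * dist x z ^ 2 - (1 / β) * Stot) := by
        apply mul_le_mul_of_nonneg_left goal' (by positivity)
    _ = dist x z ^ 2 - (1 / (β * m)) * Stot := by
        field_simp
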